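/- Let I be a finite nonempty index type and n : I → ℕ with n i ≥ 1 for all i, and let M = Π_{i ∈ I} M_{n i}(ℂ) be the product algebra of matrix algebras, with componentwise operations and componentwise star. Let B : M → M → ℂ be ℂ-bilinear and assume: (i) B 1 1 = 1; (ii) for every finite index type ι and all families x, y : ι → M, the complex number Σ_{j,k} B (star (x j) * (x k)) ((y k) * star (y j)) is a nonnegative real number; (iii) B p (1 - p) = 0 for every projection p ∈ M (i.e. every p with star p = p and p * p = p). Then there exists c : I → ℝ with c i ≥ 0 for all i and Σ_i c i = 1, such that B x y = Σ_i (c i) * trace((x i) * (y i)) / (n i) for all x, y ∈ M. -/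

import Mathlib

set_option linter.unusedSectionVars false
open scoped ComplexOrder

section DiagAuxLemmas

open Matrix

lemma diag_star_stdBasisMatrix {m : Type*} [DecidableEq m] (a b : m) (c : ℂ) :
    star (Matrix.single a b c) = Matrix.single b a (star c) := by
  ext i j
  simp only [Matrix.star_apply, Matrix.single, of_apply]
  by_cases h1 : b = i <;> by_cases h2 : a = j <;> simp [h1, h2]

lemma diag_quad_aux (lam mu : ℝ) (h : ∀ s : ℝ, 0 ≤ s * lam + s ^ 2 * mu) : lam = 0 := by
  have hmu : 0 ≤ mu := by
    have h1 := h 1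
    have h2 := h (-1)
    nlinarith
  by_contra hl
  have hl2 : 0 < lam ^ 2 := by positivity
  set k : ℝ := 1 / (2 * (mu + 1)) with hk
  have hk0 : 0 < k := by positivity
  have hkeq : k * (2 * (mu + 1)) = 1 := by
    rw [hk]; field_simp
  have hkm : k * mu ≤ 1 / 2 := by nlinarith
  have h1 := h (-(lam * k))
  have hprod : (lam ^ 2 * k) * (k * mu) ≤ (lam ^ 2 * k) * (1 / 2) :=
    mul_le_mul_of_nonneg_left hkm (le_of_lt (mul_pos hl2 hk0))
  nlinarith [mul_pos hl2 hk0]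

lemma diag_cs_aux (b c d : ℂ)
    (hq : ∀ t : ℂ, 0 ≤ t * b + (starRingEnd ℂ) t * c + (t * (starRingEnd ℂ) t) * d) :
    b = 0 ∧ c = 0 := by
  have him : ∀ t : ℂ, (t * b + (starRingEnd ℂ) t * c + (t * (starRingEnd ℂ) t) * d).im = 0 := by
    intro t
    have := (Complex.le_def.mp (hq t)).2
    simpa using this.symm
  have hre : ∀ t : ℂ, 0 ≤ (t * b + (starRingEnd ℂ) t * c + (t * (starRingEnd ℂ) t) * d).re := by
    intro t
    have := (Complex.le_def.mp (hq t)).1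
    simpa using this
  have E1 := him 1
  have E2 := him (-1)
  have E3 := him Complex.I
  simp [Complex.add_im, Complex.mul_im, Complex.mul_re, Complex.conj_I] at E1 E2 E3
  have hdim : d.im = 0 := by linarith
  have hbc_im : b.im + c.im = 0 := by linarith
  have hbc_re : b.re = c.re := by linarith
  have R1 : b.re + c.re = 0 := by
    apply diag_quad_aux _ d.re
    intro s
    have h := hre (s : ℂ)
    simp [Complex.add_re, Complex.mul_re, Complex.conj_ofReal, Complex.ofReal_re,
      Complex.ofReal_im] at h
    ring_nf at h ⊢
    nlinarith [h]
  have R2 : c.im - b.im = 0 := by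
    apply diag_quad_aux _ d.re
    intro s
    have h := hre ((s : ℂ) * Complex.I)
    simp [Complex.add_re, Complex.mul_re, Complex.mul_im, Complex.conj_ofReal,
      Complex.conj_I, Complex.ofReal_re, Complex.ofReal_im, Complex.I_re, Complex.I_im] at h
    ring_nf at h ⊢
    nlinarith [h]
  refine ⟨Complex.ext ?_ ?_, Complex.ext ?_ ?_⟩ <;>
    simp only [Complex.zero_re, Complex.zero_im] <;> linarith

end DiagAuxLemmas

section DiagBimodSection

open Matrix

variable {I : Type*} [Fintype I] [DecidableEq I] {n : I → ℕ}
variable (B : (∀ i, Matrix (Fin (n i)) (Fin (n i)) ℂ) →ₗ[ℂ]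
    (∀ i, Matrix (Fin (n i)) (Fin (n i)) ℂ) →ₗ[ℂ] ℂ)

/-- the two-sided module property of `B` with respect to an element `z`. -/
def DiagBimod (z : ∀ i, Matrix (Fin (n i)) (Fin (n i)) ℂ) : Prop :=
  ∀ x y, B (x * z) y = B x (z * y) ∧ B (z * x) y = B x (y * z)

lemma diagBimod_zero : DiagBimod B 0 := by
  intro x y; simp

lemma diagBimod_add {z₁ z₂} (h₁ : DiagBimod B z₁) (h₂ : DiagBimod B z₂) :
    DiagBimod B (z₁ + z₂) := by
  intro x y
  constructor
  · simp only [mul_add, add_mul, map_add, LinearMap.add_apply, (h₁ x y).1, (h₂ x y).1]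
  · simp only [mul_add, add_mul, map_add, LinearMap.add_apply, (h₁ x y).2, (h₂ x y).2]

lemma diagBimod_smul (c : ℂ) {z} (h : DiagBimod B z) : DiagBimod B (c • z) := by
  intro x y
  constructor
  · simp only [mul_smul_comm, smul_mul_assoc, _root_.map_smul, LinearMap.smul_apply, (h x y).1]
  · simp only [mul_smul_comm, smul_mul_assoc, _root_.map_smul, LinearMap.smul_apply, (h x y).2]

lemma diagBimod_mul {z₁ z₂} (h₁ : DiagBimod B z₁) (h₂ : DiagBimod B z₂) :
    DiagBimod B (z₁ * z₂) := by
  intro x y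
  constructor
  · calc B (x * (z₁ * z₂)) y = B ((x * z₁) * z₂) y := by rw [mul_assoc]
      _ = B (x * z₁) (z₂ * y) := (h₂ _ _).1
      _ = B x (z₁ * (z₂ * y)) := (h₁ _ _).1
      _ = B x ((z₁ * z₂) * y) := by rw [mul_assoc]
  · calc B ((z₁ * z₂) * x) y = B (z₁ * (z₂ * x)) y := by rw [mul_assoc]
      _ = B (z₂ * x) (y * z₁) := (h₁ _ _).2
      _ = B x ((y * z₁) * z₂) := (h₂ _ _).2
      _ = B x (y * (z₁ * z₂)) := by rw [mul_assoc]

lemma diagBimod_proj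
    (hA : ∀ p, star p = p → p * p = p → ∀ x y, B (x * p) ((1 - p) * y) = 0)
    (hB : ∀ p, star p = p → p * p = p → ∀ x y, B (p * x) (y * (1 - p)) = 0)
    {p} (h1 : star p = p) (h2 : p * p = p) : DiagBimod B p := by
  have h1' : star (1 - p) = 1 - p := by rw [star_sub, star_one, h1]
  have h2' : (1 - p) * (1 - p) = 1 - p := by
    rw [mul_sub, sub_mul, sub_mul, h2, mul_one, mul_one, one_mul]; abel
  intro x y
  constructor
  · have d1 : B (x * p) y = B (x * p) (p * y) := by
      conv_lhs => rw [show y = p * y + (1 - p) * y from by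
        rw [← add_mul, show p + (1 - p) = (1 : _) from by abel, one_mul]]
      rw [map_add, hA p h1 h2 x y, add_zero]
    have d2 : B x (p * y) = B (x * p) (p * y) := by
      conv_lhs => rw [show x = x * p + x * (1 - p) from by
        rw [← mul_add, show p + (1 - p) = (1 : _) from by abel, mul_one]]
      rw [map_add, LinearMap.add_apply]
      have h0 := hA (1 - p) h1' h2' x y
      rw [sub_sub_cancel] at h0
      rw [h0, add_zero]
    rw [d1, d2]
  · have d1 : B (p * x) y = B (p * x) (y * p) := by
      conv_lhs => rw [show y = y * p + y * (1 - p) from by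
        rw [← mul_add, show p + (1 - p) = (1 : _) from by abel, mul_one]]
      rw [map_add, hB p h1 h2 x y, add_zero]
    have d2 : B x (y * p) = B (p * x) (y * p) := by
      conv_lhs => rw [show x = p * x + (1 - p) * x from by
        rw [← add_mul, show p + (1 - p) = (1 : _) from by abel, one_mul]]
      rw [map_add, LinearMap.add_apply]
      have h0 := hB (1 - p) h1' h2' x y
      rw [sub_sub_cancel] at h0
      rw [h0, add_zero]
    rw [d1, d2]

lemma diagBimod_basis
    (hA : ∀ p, star p = p → p * p = p → ∀ x y, B (x * p) ((1 - p) * y) = 0)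
    (hB : ∀ p, star p = p → p * p = p → ∀ x y, B (p * x) (y * (1 - p)) = 0)
    (i : I) (a b : Fin (n i)) :
    DiagBimod B (Pi.single i (Matrix.single a b (1 : ℂ))) := by
  have hdiagproj : ∀ u : Fin (n i), DiagBimod B (Pi.single i (Matrix.single u u (1 : ℂ))) := by
    intro u
    refine diagBimod_proj B hA hB ?_ ?_
    · rw [← Pi.single_star, diag_star_stdBasisMatrix, star_one]
    · rw [← Pi.single_mul, Matrix.single_mul_single_same, one_mul]
  by_cases hab : a = b
  · subst hab; exact hdiagproj a
  · set s : Matrix (Fin (n i)) (Fin (n i)) ℂ :=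
      Matrix.single a a 1 + Matrix.single a b 1 + Matrix.single b a 1 + Matrix.single b b 1
      with hs
    set q : Matrix (Fin (n i)) (Fin (n i)) ℂ := (1 / 2 : ℂ) • s with hqdef
    have hsstar : star s = s := by
      rw [hs]
      simp only [star_add, diag_star_stdBasisMatrix, star_one]
      abel
    have hz1 : ∀ (u v : Fin (n i)) (c d : ℂ),
        Matrix.single u a c * Matrix.single b v d = 0 := fun u v c d =>
      Matrix.single_mul_single_of_ne (c := c) u a b hab d
    have hz2 : ∀ (u v : Fin (n i)) (c d : ℂ),
        Matrix.single u b c * Matrix.single a v d = 0 := fun u v c d =>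
      Matrix.single_mul_single_of_ne (c := c) u b a (Ne.symm hab) d
    have hss : s * s = (2 : ℂ) • s := by
      rw [hs]
      simp only [add_mul, mul_add, Matrix.single_mul_single_same, hz1, hz2,
        one_mul, add_zero, zero_add]
      rw [two_smul]
      abel
    have hqstar : star q = q := by
      rw [hqdef, star_smul, hsstar]
      congr 1
      simp
    have hqmul : q * q = q := by
      rw [hqdef, smul_mul_assoc, mul_smul_comm, hss, smul_smul, smul_smul]
      norm_num
    have hmat : Matrix.single a b (1 : ℂ) =
        (2 : ℂ) • (Matrix.single a a 1 * q * Matrix.single b b 1) := by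
      have hcalc : Matrix.single a a (1 : ℂ) * s * Matrix.single b b 1
          = Matrix.single a b 1 := by
        rw [hs]
        simp [mul_add, add_mul, Matrix.single_mul_single_same, hz1, hz2]
      rw [hqdef, mul_smul_comm, smul_mul_assoc, hcalc, smul_smul]
      norm_num
    have hid : (Pi.single i (Matrix.single a b (1 : ℂ)) :
          ∀ j, Matrix (Fin (n j)) (Fin (n j)) ℂ) =
        (2 : ℂ) • ((Pi.single i (Matrix.single a a (1 : ℂ)) :
            ∀ j, Matrix (Fin (n j)) (Fin (n j)) ℂ) *
          (Pi.single i q : ∀ j, Matrix (Fin (n j)) (Fin (n j)) ℂ) *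
          (Pi.single i (Matrix.single b b (1 : ℂ)) :
            ∀ j, Matrix (Fin (n j)) (Fin (n j)) ℂ)) := by
      calc (Pi.single i (Matrix.single a b (1 : ℂ)) :
            ∀ j, Matrix (Fin (n j)) (Fin (n j)) ℂ)
          = Pi.single i ((2 : ℂ) • (Matrix.single a a 1 * q * Matrix.single b b 1)) := by
            rw [← hmat]
        _ = (2 : ℂ) • ((Pi.single i (Matrix.single a a (1 : ℂ)) :
              ∀ j, Matrix (Fin (n j)) (Fin (n j)) ℂ) *
            (Pi.single i q : ∀ j, Matrix (Fin (n j)) (Fin (n j)) ℂ) *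
            (Pi.single i (Matrix.single b b (1 : ℂ)) :
              ∀ j, Matrix (Fin (n j)) (Fin (n j)) ℂ)) := by
            rw [Pi.single_smul, Pi.single_mul, Pi.single_mul]
    rw [hid]
    refine diagBimod_smul B _ (diagBimod_mul B (diagBimod_mul B (hdiagproj a) ?_) (hdiagproj b))
    refine diagBimod_proj B hA hB ?_ ?_
    · rw [← Pi.single_star, hqstar]
    · rw [← Pi.single_mul, hqmul]

lemma diag_pi_single_sum {α : Type*} (i : I) (s : Finset α)
    (g : α → Matrix (Fin (n i)) (Fin (n i)) ℂ) :
    (Pi.single i (∑ j ∈ s, g j) : ∀ j, Matrix (Fin (n j)) (Fin (n j)) ℂ)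
      = ∑ j ∈ s, (Pi.single i (g j) : ∀ j, Matrix (Fin (n j)) (Fin (n j)) ℂ) := by
  exact map_sum (LinearMap.single ℂ (fun j => Matrix (Fin (n j)) (Fin (n j)) ℂ) i) g s

lemma diagBimod_all
    (hA : ∀ p, star p = p → p * p = p → ∀ x y, B (x * p) ((1 - p) * y) = 0)
    (hB : ∀ p, star p = p → p * p = p → ∀ x y, B (p * x) (y * (1 - p)) = 0)
    (z : ∀ i, Matrix (Fin (n i)) (Fin (n i)) ℂ) : DiagBimod B z := by
  rw [← Finset.univ_sum_single z]
  apply Finset.sum_induction _ _ (fun _ _ h1 h2 => diagBimod_add B h1 h2) (diagBimod_zero B)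
  intro i _
  have hdecomp : (Pi.single i (z i) : ∀ j, Matrix (Fin (n j)) (Fin (n j)) ℂ) =
      ∑ a, ∑ b, (z i a b) • (Pi.single i (Matrix.single a b (1 : ℂ)) :
        ∀ j, Matrix (Fin (n j)) (Fin (n j)) ℂ) := by
    have h1 : (Pi.single i (z i) : ∀ j, Matrix (Fin (n j)) (Fin (n j)) ℂ)
        = ∑ a, ∑ b, (Pi.single i (Matrix.single a b (z i a b)) :
            ∀ j, Matrix (Fin (n j)) (Fin (n j)) ℂ) := by
      conv_lhs => rw [Matrix.matrix_eq_sum_single (z i)]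
      simp only [diag_pi_single_sum]
    rw [h1]
    refine Finset.sum_congr rfl fun a _ => Finset.sum_congr rfl fun b _ => ?_
    rw [show Matrix.single a b (z i a b) = (z i a b) • Matrix.single a b (1 : ℂ) from by
      rw [Matrix.smul_single, smul_eq_mul, mul_one], Pi.single_smul]
  rw [hdecomp]
  apply Finset.sum_induction _ _ (fun _ _ h1 h2 => diagBimod_add B h1 h2) (diagBimod_zero B)
  intro a _
  apply Finset.sum_induction _ _ (fun _ _ h1 h2 => diagBimod_add B h1 h2) (diagBimod_zero B)
  intro b _
  exact diagBimod_smul B _ (diagBimod_basis B hA hB i a b)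

end DiagBimodSection

theorem diagonal_state_on_product_of_matrix_factors
    (I : Type*) [Fintype I] [Nonempty I] (n : I → ℕ) (hn : ∀ i, 1 ≤ n i)
    (B : (∀ i, Matrix (Fin (n i)) (Fin (n i)) ℂ) →ₗ[ℂ]
         (∀ i, Matrix (Fin (n i)) (Fin (n i)) ℂ) →ₗ[ℂ] ℂ)
    (hunit : B 1 1 = 1)
    (hpos : ∀ (ι : Type) [Fintype ι]
      (x y : ι → (∀ i, Matrix (Fin (n i)) (Fin (n i)) ℂ)),
      0 ≤ ∑ j, ∑ k, B (star (x j) * (x k)) ((y k) * star (y j)))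
    (hdiag : ∀ p : (∀ i, Matrix (Fin (n i)) (Fin (n i)) ℂ),
      star p = p → p * p = p → B p (1 - p) = 0) :
    ∃ c : I → ℝ, (∀ i, 0 ≤ c i) ∧ (∑ i, c i) = 1 ∧
      ∀ x y : (∀ i, Matrix (Fin (n i)) (Fin (n i)) ℂ),
        B x y = ∑ i, (c i : ℂ) * ((x i) * (y i)).trace / (n i : ℂ) := by
  classical
  -- single-vector positivity
  have hpos1 : ∀ v w : (∀ i, Matrix (Fin (n i)) (Fin (n i)) ℂ),
      0 ≤ B (star v * v) (w * star w) := by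
    intro v w
    simpa using hpos Unit (fun _ => v) (fun _ => w)
  -- quadratic positivity
  have hquad : ∀ (v1 v2 w1 w2 : ∀ i, Matrix (Fin (n i)) (Fin (n i)) ℂ) (t : ℂ),
      0 ≤ B (star v1 * v1) (v2 * star v2)
        + t * B (star v1 * w1) (w2 * star v2)
        + (starRingEnd ℂ) t * B (star w1 * v1) (v2 * star w2)
        + (t * (starRingEnd ℂ) t) * B (star w1 * w1) (w2 * star w2) := by
    intro v1 v2 w1 w2 t
    have h := hpos (Fin 2) ![v1, t • w1] ![v2, w2]
    simp only [Fin.sum_univ_two, Matrix.cons_val_zero, Matrix.cons_val_one, Matrix.head_cons,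
      star_smul, smul_mul_assoc, mul_smul_comm, map_smul, LinearMap.smul_apply, smul_eq_mul,
      smul_smul, Complex.star_def] at h
    refine le_of_le_of_eq h ?_
    ring
  -- null vectors
  have hnull : ∀ v1 v2 w1 w2 : ∀ i, Matrix (Fin (n i)) (Fin (n i)) ℂ,
      B (star v1 * v1) (v2 * star v2) = 0 →
      B (star v1 * w1) (w2 * star v2) = 0 ∧ B (star w1 * v1) (v2 * star w2) = 0 := by
    intro v1 v2 w1 w2 hv
    refine diag_cs_aux _ _ (B (star w1 * w1) (w2 * star w2)) ?_
    intro t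
    have h := hquad v1 v2 w1 w2 t
    rw [hv, zero_add] at h
    exact h
  -- the two key orthogonality relations
  have hA : ∀ p, star p = p → p * p = p →
      ∀ x y, B (x * p) ((1 - p) * y) = 0 := by
    intro p h1 h2 x y
    have h1' : star (1 - p) = 1 - p := by rw [star_sub, star_one, h1]
    have h2' : (1 - p) * (1 - p) = 1 - p := by
      rw [mul_sub, sub_mul, sub_mul, h2, mul_one, mul_one, one_mul]; abel
    have hv : B (star p * p) ((1 - p) * star (1 - p)) = 0 := by
      rw [h1, h2, h1', h2']
      exact hdiag p h1 h2
    have h := (hnull p (1 - p) (star x) (star y) hv).2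
    rwa [star_star, star_star] at h
  have hB2 : ∀ p, star p = p → p * p = p →
      ∀ x y, B (p * x) (y * (1 - p)) = 0 := by
    intro p h1 h2 x y
    have h1' : star (1 - p) = 1 - p := by rw [star_sub, star_one, h1]
    have h2' : (1 - p) * (1 - p) = 1 - p := by
      rw [mul_sub, sub_mul, sub_mul, h2, mul_one, mul_one, one_mul]; abel
    have hv : B (star p * p) ((1 - p) * star (1 - p)) = 0 := by
      rw [h1, h2, h1', h2']
      exact hdiag p h1 h2
    have h := (hnull p (1 - p) x y hv).1
    rwa [h1, h1'] at h
  have hbim := diagBimod_all B hA hB2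
  -- trace functional machinery
  set o : ∀ i, Fin (n i) := fun i => ⟨0, hn i⟩ with ho
  set lam : I → ℂ :=
    fun i => B (Pi.single i (Matrix.single (o i) (o i) 1)) 1 with hlam
  have hswap : ∀ x y, B x y = B (x * y) 1 := by
    intro x y
    have h := (hbim y x 1).1
    rw [mul_one] at h
    exact h.symm
  have hto1 : ∀ x y, B x y = B 1 (y * x) := by
    intro x y
    have h := (hbim x 1 y).2
    rwa [mul_one] at h
  have hcomm : ∀ x y, B (x * y) 1 = B (y * x) 1 := by
    intro x y
    rw [← hswap x y, hto1 x y, hswap 1 (y * x), one_mul]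
  have hsingle_tr : ∀ (i : I) (Z : Matrix (Fin (n i)) (Fin (n i)) ℂ),
      B (Pi.single i Z) 1 = lam i * Z.trace := by
    intro i Z
    have hbasis : ∀ (a b : Fin (n i)) (cc : ℂ),
        B (Pi.single i (Matrix.single a b cc)) 1
          = if a = b then cc * lam i else 0 := by
      intro a b cc
      have h1 : Matrix.single a b cc
          = Matrix.single a (o i) 1 * Matrix.single (o i) b cc := by
        rw [Matrix.single_mul_single_same, one_mul]
      rw [h1, Pi.single_mul, hcomm, ← Pi.single_mul]
      by_cases hba : b = a
      · subst hba
        rw [Matrix.single_mul_single_same, if_pos rfl, mul_one]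
        rw [show Matrix.single (o i) (o i) cc
            = cc • Matrix.single (o i) (o i) (1 : ℂ) from by
          rw [Matrix.smul_single, smul_eq_mul, mul_one]]
        rw [Pi.single_smul, _root_.map_smul, LinearMap.smul_apply, smul_eq_mul]
      · rw [Matrix.single_mul_single_of_ne (c := cc) (o i) b a hba 1,
          if_neg (fun h => hba h.symm)]
        simp
    conv_lhs => rw [Matrix.matrix_eq_sum_single Z]
    simp only [diag_pi_single_sum]
    simp only [map_sum, LinearMap.coe_sum, Finset.sum_apply]
    simp only [hbasis]
    rw [Matrix.trace]
    simp only [Finset.sum_ite_eq, Finset.mem_univ, if_true, Matrix.diag]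
    rw [Finset.mul_sum]
    exact Finset.sum_congr rfl fun a _ => mul_comm _ _
  have hformula : ∀ x y : ∀ i, Matrix (Fin (n i)) (Fin (n i)) ℂ,
      B x y = ∑ i, lam i * ((x i) * (y i)).trace := by
    intro x y
    rw [hswap x y]
    have hxy : x * y = ∑ i, (Pi.single i (x i * y i) :
        ∀ j, Matrix (Fin (n j)) (Fin (n j)) ℂ) :=
      (Finset.univ_sum_single (x * y)).symm
    rw [hxy, map_sum, LinearMap.coe_sum, Finset.sum_apply]
    exact Finset.sum_congr rfl fun i _ => hsingle_tr i _
  -- positivity of lam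
  have hlam_pos : ∀ i, 0 ≤ lam i := by
    intro i
    have hstar : star (Pi.single i (Matrix.single (o i) (o i) (1 : ℂ)) : ∀ j, Matrix (Fin (n j)) (Fin (n j)) ℂ)
        = (Pi.single i (Matrix.single (o i) (o i) (1 : ℂ)) : ∀ j, Matrix (Fin (n j)) (Fin (n j)) ℂ) := by
      rw [← Pi.single_star, diag_star_stdBasisMatrix, star_one]
    have hmul : (Pi.single i (Matrix.single (o i) (o i) (1 : ℂ)) : ∀ j, Matrix (Fin (n j)) (Fin (n j)) ℂ) * (Pi.single i (Matrix.single (o i) (o i) (1 : ℂ)) : ∀ j, Matrix (Fin (n j)) (Fin (n j)) ℂ) = (Pi.single i (Matrix.single (o i) (o i) (1 : ℂ)) : ∀ j, Matrix (Fin (n j)) (Fin (n j)) ℂ) := by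
      rw [← Pi.single_mul, Matrix.single_mul_single_same, one_mul]
    have h0 := hpos1 (Pi.single i (Matrix.single (o i) (o i) 1))
      (Pi.single i (Matrix.single (o i) (o i) 1))
    rw [hstar, hmul] at h0
    have h1 : lam i = B (Pi.single i (Matrix.single (o i) (o i) 1))
        (Pi.single i (Matrix.single (o i) (o i) 1)) := by
      show B (Pi.single i (Matrix.single (o i) (o i) 1)) 1 = _
      conv_lhs => rw [← hmul]
      rw [(hbim (Pi.single i (Matrix.single (o i) (o i) 1))
        (Pi.single i (Matrix.single (o i) (o i) 1)) 1).1, mul_one]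
    rw [h1]
    exact h0
  have hlam_im : ∀ i, (lam i).im = 0 := by
    intro i
    have := (Complex.le_def.mp (hlam_pos i)).2
    simpa using this.symm
  have hlam_re : ∀ i, 0 ≤ (lam i).re := by
    intro i
    have := (Complex.le_def.mp (hlam_pos i)).1
    simpa using this
  have hsum1 : ∑ i, lam i * (n i : ℂ) = 1 := by
    have h := hformula 1 1
    rw [hunit] at h
    have : ∑ i, lam i * (((1 : ∀ i, Matrix (Fin (n i)) (Fin (n i)) ℂ) i)
        * ((1 : ∀ i, Matrix (Fin (n i)) (Fin (n i)) ℂ) i)).trace = ∑ i, lam i * (n i : ℂ) := by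
      refine Finset.sum_congr rfl fun i _ => ?_
      simp [Matrix.trace_one]
    rw [this] at h
    exact h.symm
  refine ⟨fun i => (lam i).re * (n i : ℝ), ?_, ?_, ?_⟩
  · intro i
    exact mul_nonneg (hlam_re i) (Nat.cast_nonneg _)
  · have h := congrArg Complex.re hsum1
    rw [Complex.re_sum] at h
    simpa [Complex.mul_re, Complex.natCast_re, Complex.natCast_im] using h
  · intro x y
    rw [hformula x y]
    refine Finset.sum_congr rfl fun i _ => ?_
    have hlr : ((lam i).re : ℂ) = lam i :=
      Complex.ext (by simp) (by simp [hlam_im i])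
    have hn0 : (n i : ℂ) ≠ 0 := Nat.cast_ne_zero.mpr (by have := hn i; omega)
    push_cast
    rw [hlr]
    field_simp
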